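/- Let G be a finite p-group and F a field of characteristic p. The ideal of FG generated by [FG, FG] together with all central elements of the augmentation ideal Δ(G) equals the kernel of the induced map FG → F[G / (Z(G)·G')], i.e. equals Δ(Z(G)G')·FG. -/

import Mathlib

open MonoidAlgebra
open scoped commutatorElement

section Aux
variable {F G : Type*} [Field F] [Group G]

/-- The set of group elements `g` with `single g 1 - 1` in a two-sided ideal `I`
forms a subgroup. -/
def auxSubgroup (I : TwoSidedIdeal (MonoidAlgebra F G)) : Subgroup G where
  carrier := {g | (single g 1 : MonoidAlgebra F G) - 1 ∈ I}
  one_mem' := by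
    simp only [Set.mem_setOf_eq, ← MonoidAlgebra.one_def, sub_self]
    exact I.zero_mem
  mul_mem' := by
    intro a b ha hb
    have key : (single (a * b) 1 : MonoidAlgebra F G) - 1
        = single a 1 * (single b 1 - 1) + (single a 1 - 1) := by
      simp only [mul_sub, mul_one, one_mul, MonoidAlgebra.single_mul_single]
      abel
    simpa [key] using I.add_mem (I.mul_mem_left _ _ hb) ha
  inv_mem' := by
    intro a ha
    have key : (single a⁻¹ 1 : MonoidAlgebra F G) - 1
        = -(single a⁻¹ 1 * (single a 1 - 1)) := by
      simp only [mul_sub, mul_one, one_mul, MonoidAlgebra.single_mul_single,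
        inv_mul_cancel, ← MonoidAlgebra.one_def]
      abel
    simpa [key] using I.neg_mem (I.mul_mem_left _ _ ha)

end Aux

/-- Let `G` be a finite `p`-group and `F` a field of characteristic `p`.
The two-sided ideal of `FG` generated by the Lie commutators `u*v - v*u`
together with all central elements of the augmentation ideal `Δ(G)` equals
`Δ(Z(G)G')·FG`, the kernel of the induced map `FG → F[G/(Z(G)·G')]`.
Here the augmentation map is `MonoidAlgebra.lift F G F 1`. -/
theorem twoSidedIdeal_span_commutators_central_eq_ker
    (p : ℕ) [Fact p.Prime] (F G : Type*) [Field F] [CharP F p]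
    [Group G] [Finite G] (hG : IsPGroup p G) :
    ∀ x : MonoidAlgebra F G,
      x ∈ TwoSidedIdeal.span
            ({y : MonoidAlgebra F G | ∃ u v : MonoidAlgebra F G, y = u * v - v * u}
              ∪ {y : MonoidAlgebra F G |
                    MonoidAlgebra.lift F F G 1 y = 0 ∧ y ∈ Set.center (MonoidAlgebra F G)})
      ↔ x ∈ RingHom.ker
            (MonoidAlgebra.mapDomainRingHom F
              (QuotientGroup.mk' (Subgroup.center G ⊔ commutator G))) := by
  classical
  intro x
  letI : Fintype G := Fintype.ofFinite G
  set N : Subgroup G := Subgroup.center G ⊔ commutator G with hNdef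
  set π : G →* G ⧸ N := QuotientGroup.mk' N with hπdef
  set S : Set (MonoidAlgebra F G) :=
    ({y : MonoidAlgebra F G | ∃ u v : MonoidAlgebra F G, y = u * v - v * u}
      ∪ {y : MonoidAlgebra F G |
          MonoidAlgebra.lift F F G 1 y = 0 ∧ y ∈ Set.center (MonoidAlgebra F G)}) with hSdef
  set f : MonoidAlgebra F G →+* MonoidAlgebra F (G ⧸ N) :=
    MonoidAlgebra.mapDomainRingHom F π with hfdef
  -- conjugation does not change the coset
  have hπconj : ∀ c g : G, π (c * g * c⁻¹) = π g := by
    intro c g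
    simp only [hπdef, QuotientGroup.mk'_apply]
    rw [QuotientGroup.eq]
    have h3 : (c * g * c⁻¹)⁻¹ * g = ⁅c, g⁻¹⁆ := by
      rw [commutatorElement_def]; group
    rw [h3]
    exact Subgroup.mem_sup_right
      (Subgroup.commutator_mem_commutator (Subgroup.mem_top _) (Subgroup.mem_top _))
  -- the quotient is abelian
  have habel : ∀ a b : G ⧸ N, a * b = b * a := by
    intro a b
    induction a using QuotientGroup.induction_on with
    | H a =>
    induction b using QuotientGroup.induction_on with
    | H b =>
    rw [← QuotientGroup.mk_mul, ← QuotientGroup.mk_mul, QuotientGroup.eq]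
    have h3 : (a * b)⁻¹ * (b * a) = ⁅b⁻¹, a⁻¹⁆ := by
      rw [commutatorElement_def]; group
    rw [h3]
    exact Subgroup.mem_sup_right
      (Subgroup.commutator_mem_commutator (Subgroup.mem_top _) (Subgroup.mem_top _))
  constructor
  · -- span ⊆ ker
    intro hx
    rw [RingHom.mem_ker]
    have hsub : S ⊆ (TwoSidedIdeal.ker f : Set (MonoidAlgebra F G)) := by
      rintro y (⟨u, v, rfl⟩ | ⟨hy0, hyc⟩)
      · -- commutators die in the abelian quotient
        have : f u * f v = f v * f u := by
          letI : CommGroup (G ⧸ N) :=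
            { (inferInstance : Group (G ⧸ N)) with mul_comm := habel }
          exact mul_comm _ _
        simp [SetLike.mem_coe, TwoSidedIdeal.mem_ker, map_sub, map_mul, this]
      · -- central elements of the augmentation ideal die
        rw [SetLike.mem_coe, TwoSidedIdeal.mem_ker f]
        -- conjugation invariance of the coefficients of the central element y
        have hconj : ∀ c a : G, y.coeff (c * a * c⁻¹) = y.coeff a := by
          intro c a
          have h1 := Semigroup.mem_center_iff.mp hyc (single c 1)
          have h2 : ((single c 1 : MonoidAlgebra F G) * y).coeff (c * a)
              = (y * (single c 1 : MonoidAlgebra F G)).coeff (c * a) := by rw [h1]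
          rw [MonoidAlgebra.coeff_single_mul_apply, MonoidAlgebra.coeff_mul_single_apply, one_mul,
            mul_one, inv_mul_cancel_left] at h2
          exact h2.symm
        letI : Fintype (G ⧸ N) := Fintype.ofFinite _
        -- coefficients of the image
        have hcoe : ∀ q : G ⧸ N, Finsupp.mapDomain π y.coeff q =
            ∑ g ∈ Finset.univ.filter (fun g => π g = q), y.coeff g := by
          intro q
          rw [Finsupp.mapDomain, Finsupp.sum_apply, Finsupp.sum, Finset.sum_filter]
          rw [Finset.sum_subset (Finset.subset_univ y.coeff.support) (by
            intro g _ hg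
            simp [Finsupp.notMem_support_iff.mp hg])]
          apply Finset.sum_congr rfl
          intro g _
          rw [Finsupp.single_apply]
        -- fibers over nontrivial cosets sum to zero
        have key : ∀ q : G ⧸ N, q ≠ 1 →
            ∑ g ∈ Finset.univ.filter (fun g => π g = q), y.coeff g = 0 := by
          intro q hq
          letI : Fintype (ConjClasses G) := Fintype.ofFinite _
          rw [← Finset.sum_fiberwise_of_maps_to
            (g := fun g => ConjClasses.mk g) (t := Finset.univ)
            (fun g _ => Finset.mem_univ _)]
          apply Finset.sum_eq_zero
          intro cl _
          set T := (Finset.univ.filter fun g => π g = q).filter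
            (fun g => ConjClasses.mk g = cl) with hTdef
          rcases Finset.eq_empty_or_nonempty T with hT | ⟨g₀, hg₀⟩
          · rw [hT, Finset.sum_empty]
          · have hg₀' := Finset.mem_filter.mp hg₀
            have hg₀q : π g₀ = q := (Finset.mem_filter.mp hg₀'.1).2
            have hg₀cl : ConjClasses.mk g₀ = cl := hg₀'.2
            -- T is the conjugacy class of g₀
            letI : Fintype (MulAction.orbit (ConjAct G) g₀) := Fintype.ofFinite _
            have hTeq : T = (MulAction.orbit (ConjAct G) g₀).toFinset := by
              ext g
              simp only [hTdef, Finset.mem_filter, Finset.mem_univ, true_and,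
                Set.mem_toFinset, ConjAct.mem_orbit_conjAct]
              constructor
              · rintro ⟨-, hgcl⟩
                exact ConjClasses.mk_eq_mk_iff_isConj.mp (hgcl.trans hg₀cl.symm)
              · intro hcj
                obtain ⟨c, hc⟩ := isConj_iff.mp hcj.symm
                constructor
                · rw [← hc, hπconj, hg₀q]
                · rw [← hg₀cl]
                  exact ConjClasses.mk_eq_mk_iff_isConj.mpr hcj
            -- y is constant on T
            have hconst : ∀ g ∈ T, y.coeff g = y.coeff g₀ := by
              intro g hg
              rw [hTeq, Set.mem_toFinset, ConjAct.mem_orbit_conjAct] at hg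
              obtain ⟨c, hc⟩ := isConj_iff.mp hg.symm
              rw [← hc, hconj]
            -- p divides the cardinality of T
            have hdvd : p ∣ T.card := by
              have hcard : T.card = Fintype.card (MulAction.orbit (ConjAct G) g₀) := by
                rw [hTeq, Set.toFinset_card]
              letI : Fintype (ConjAct G) := Fintype.ofFinite _
              have horb := MulAction.card_orbit_mul_card_stabilizer_eq_card_group
                (ConjAct G) g₀
              have hGcard : Fintype.card (ConjAct G) = Fintype.card G := by
                rw [← Nat.card_eq_fintype_card, ← Nat.card_eq_fintype_card]
                exact Nat.card_congr ConjAct.toConjAct.toEquiv.symm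
              obtain ⟨n, hn⟩ := IsPGroup.iff_card.mp hG
              rw [Nat.card_eq_fintype_card] at hn
              have hdvd1 : T.card ∣ p ^ n := by
                rw [hcard, ← hn, ← hGcard, ← horb]
                exact Dvd.intro _ rfl
              obtain ⟨m, hm, hTm⟩ := (Nat.dvd_prime_pow (Fact.out : p.Prime)).mp hdvd1
              rcases Nat.eq_zero_or_pos m with hm0 | hm1
              · -- m = 0 : g₀ would be central, contradicting q ≠ 1
                exfalso
                rw [hm0, pow_zero] at hTm
                have hfix : g₀ ∈ MulAction.fixedPoints (ConjAct G) G := by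
                  rw [MulAction.mem_fixedPoints_iff_card_orbit_eq_one, ← hcard, hTm]
                rw [ConjAct.fixedPoints_eq_center] at hfix
                have : π g₀ = 1 := by
                  rw [hπdef, QuotientGroup.mk'_apply, QuotientGroup.eq_one_iff]
                  exact Subgroup.mem_sup_left hfix
                exact hq (by rw [← hg₀q, this])
              · rw [hTm]
                exact dvd_pow_self p (Nat.pos_iff_ne_zero.mp hm1)
            calc ∑ g ∈ T, y.coeff g = ∑ _g ∈ T, y.coeff g₀ := Finset.sum_congr rfl hconst
              _ = T.card • y.coeff g₀ := by rw [Finset.sum_const]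
              _ = (T.card : F) * y.coeff g₀ := by rw [nsmul_eq_mul]
              _ = 0 := by
                  rw [(CharP.cast_eq_zero_iff F p T.card).mpr hdvd, zero_mul]
        -- total sum is the augmentation, which vanishes
        have hsumall : ∑ g : G, y.coeff g = 0 := by
          have h0 := hy0
          rw [MonoidAlgebra.lift_apply] at h0
          simp only [MonoidHom.one_apply, smul_eq_mul, mul_one] at h0
          rw [← h0, Finsupp.sum]
          exact (Finset.sum_subset (Finset.subset_univ _)
            (fun g _ hg => Finsupp.notMem_support_iff.mp hg)).symm
        have htot : ∑ q : G ⧸ N,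
            ∑ g ∈ Finset.univ.filter (fun g => π g = q), y.coeff g = 0 := by
          rw [Finset.sum_fiberwise_of_maps_to (fun g _ => Finset.mem_univ (π g))]
          exact hsumall
        have hone : ∑ g ∈ Finset.univ.filter (fun g => π g = (1 : G ⧸ N)), y.coeff g = 0 := by
          rw [Finset.sum_eq_single (1 : G ⧸ N)] at htot
          · exact htot
          · exact fun q _ hq => key q hq
          · simp
        show MonoidAlgebra.mapDomain π y = 0
        apply MonoidAlgebra.coeff_injective
        ext q
        show Finsupp.mapDomain π y.coeff q = (0 : G ⧸ N →₀ F) q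
        rw [hcoe q]
        by_cases hq1 : q = 1
        · rw [hq1, hone]
          rfl
        · rw [key q hq1]
          rfl
    exact (TwoSidedIdeal.mem_ker f).mp (TwoSidedIdeal.mem_span_iff.mp hx _ hsub)
  · -- ker ⊆ span
    intro hx
    rw [RingHom.mem_ker] at hx
    set I : TwoSidedIdeal (MonoidAlgebra F G) := TwoSidedIdeal.span S with hIdef
    -- all n - 1 for n ∈ N lie in I
    have hN1 : ∀ n ∈ N, (single n 1 : MonoidAlgebra F G) - 1 ∈ I := by
      have hle : N ≤ auxSubgroup I := by
        rw [hNdef]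
        apply sup_le
        · -- central group elements
          intro z hz
          show (single z 1 : MonoidAlgebra F G) - 1 ∈ I
          apply TwoSidedIdeal.subset_span
          right
          constructor
          · simp [MonoidAlgebra.lift_single]
          · rw [Semigroup.mem_center_iff]
            intro w
            have hc : w * (single z 1 : MonoidAlgebra F G) = single z 1 * w := by
              ext a
              rw [MonoidAlgebra.coeff_mul_single_apply, MonoidAlgebra.coeff_single_mul_apply]
              rw [one_mul, mul_one]
              congr 1
              have hz' := Subgroup.mem_center_iff.mp hz
              have : z⁻¹ ∈ Subgroup.center G := (Subgroup.center G).inv_mem hz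
              have := Subgroup.mem_center_iff.mp this a
              rw [this]
            rw [mul_sub, sub_mul, mul_one, one_mul, hc]
        · -- commutator subgroup
          rw [commutator_eq_closure, Subgroup.closure_le]
          rintro - ⟨a, b, rfl⟩
          show (single ⁅a, b⁆ 1 : MonoidAlgebra F G) - 1 ∈ I
          have hgen : (single a⁻¹ 1 * single b⁻¹ 1 - single b⁻¹ 1 * single a⁻¹ 1 :
              MonoidAlgebra F G) ∈ I :=
            TwoSidedIdeal.subset_span (Or.inl ⟨_, _, rfl⟩)
          have key : (single ⁅a, b⁆ 1 : MonoidAlgebra F G) - 1 =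
              single (a * b) 1 *
                (single a⁻¹ 1 * single b⁻¹ 1 - single b⁻¹ 1 * single a⁻¹ 1) := by
            simp only [mul_sub, MonoidAlgebra.single_mul_single, one_mul,
              commutatorElement_def, mul_assoc, mul_inv_cancel_left, mul_inv_cancel,
              ← MonoidAlgebra.one_def]
          rw [key]
          exact I.mul_mem_left _ _ hgen
      intro n hn
      exact hle hn
    -- the "retraction" onto coset representatives kills x
    set r : G → G := fun g => ((π g : G ⧸ N)).out with hrdef
    have hrπ : ∀ g, π (r g) = π g := by
      intro g
      simp [hrdef, hπdef, QuotientGroup.mk'_apply, QuotientGroup.out_eq']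
    set y : MonoidAlgebra F G := MonoidAlgebra.mapDomain r x with hydef
    have hmap0 : y = 0 := by
      have hcomp : (MonoidAlgebra.mapDomain r x : MonoidAlgebra F G) =
          MonoidAlgebra.mapDomain (Quotient.out) (MonoidAlgebra.mapDomain π x) := by
        show MonoidAlgebra.ofCoeff (Finsupp.mapDomain r x.coeff) = MonoidAlgebra.ofCoeff
          (Finsupp.mapDomain (Quotient.out) (Finsupp.mapDomain π x.coeff))
        rw [← Finsupp.mapDomain_comp]
        rfl
      have h4 : MonoidAlgebra.mapDomain π x = 0 := hx
      rw [hydef, hcomp, h4, MonoidAlgebra.mapDomain_zero]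
    have hxeq : x = x - y := by rw [hmap0, sub_zero]
    rw [hxeq]
    have hxsum : x - y =
        ∑ g ∈ x.coeff.support, (single g (x.coeff g) - single (r g) (x.coeff g)) := by
      rw [Finset.sum_sub_distrib]
      congr 1
      · exact (MonoidAlgebra.sum_coeff_single x).symm
      · apply MonoidAlgebra.coeff_injective
        rw [MonoidAlgebra.coeff_sum]
        rfl
    rw [hxsum]
    apply sum_mem
    intro g _
    have key : (single g (x.coeff g) - single (r g) (x.coeff g) : MonoidAlgebra F G)
        = ((single (g * (r g)⁻¹) 1 : MonoidAlgebra F G) - 1) * single (r g) (x.coeff g) := by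
      rw [sub_mul, MonoidAlgebra.single_mul_single, one_mul, one_mul,
        inv_mul_cancel_right]
    rw [key]
    apply I.mul_mem_right
    apply hN1
    have : π (g * (r g)⁻¹) = 1 := by
      rw [map_mul, map_inv, hrπ, mul_inv_cancel]
    rwa [hπdef, QuotientGroup.mk'_apply, QuotientGroup.eq_one_iff] at this
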